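/- Let t ∈ ℂ∖{0,1} and let Y(z) = (y₁(z), y₂(z))ᵀ be a holomorphic solution on a simply connected domain Ω ⊆ ℂ∖{0,1,t} of dY/dz = (A₀/z + A₁/(z−1) + A_t/(z−t))Y, where A₀, A₁, A_t ∈ ℂ^{2×2}. Then the ℂ⁶-valued function U(z) = (z^{-1}y₁(z), z^{-1}y₂(z), (z−1)^{-1}y₁(z), (z−1)^{-1}y₂(z), (z−t)^{-1}y₁(z), (z−t)^{-1}y₂(z))ᵀ satisfies dU/dz = (B₀/z + B₁/(z−1) + B_t/(z−t))U, where B₀, B₁, B_t are the convolution matrices with parameter ν = −1. -/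

import Mathlib

/-- The Dettweiler–Reiter convolution matrix `B_k` (`k = 0, 1, 2` corresponding to the
singular points `0, 1, t`): the `k`-th block row is `(A₀ + δ_{k0}ν, A₁ + δ_{k1}ν, A_t + δ_{k2}ν)`
and all other block rows vanish. Indices `Fin 3 × Fin 2` encode the `6 = 3 × 2` coordinates. -/
noncomputable def convMat (A₀ A₁ At : Matrix (Fin 2) (Fin 2) ℂ) (ν : ℂ) (k : Fin 3) :
    Matrix (Fin 3 × Fin 2) (Fin 3 × Fin 2) ℂ :=
  Matrix.of fun p q =>
    if p.1 = k then
      ((if q.1 = 0 then A₀ else if q.1 = 1 then A₁ else At) +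
        (if q.1 = k then ν • (1 : Matrix (Fin 2) (Fin 2) ℂ) else 0)) p.2 q.2
    else 0

set_option maxHeartbeats 1000000 in
/-- Dettweiler–Reiter, Lemma 6.4: if `Y = (y₁, y₂)ᵀ` solves the Fuchsian
system on a simply connected domain `Ω ⊆ ℂ ∖ {0,1,t}`, then
`U(z) = (z⁻¹Y(z), (z-1)⁻¹Y(z), (z-t)⁻¹Y(z))ᵀ` solves the convoluted system with `ν = -1`. -/
theorem stmt6 (t : ℂ) (ht0 : t ≠ 0) (ht1 : t ≠ 1)
    (A₀ A₁ At : Matrix (Fin 2) (Fin 2) ℂ)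
    (Ω : Set ℂ) (hΩ : IsOpen Ω) (hsc : SimplyConnectedSpace Ω)
    (hΩ' : ∀ z ∈ Ω, z ≠ 0 ∧ z ≠ 1 ∧ z ≠ t)
    (Y : ℂ → Fin 2 → ℂ)
    (hY : ∀ z ∈ Ω, HasDerivAt Y
      ((z⁻¹ • A₀ + (z - 1)⁻¹ • A₁ + (z - t)⁻¹ • At).mulVec (Y z)) z) :
    ∀ z ∈ Ω, HasDerivAt
      (fun w => fun p : Fin 3 × Fin 2 =>
        (if p.1 = 0 then w⁻¹ else if p.1 = 1 then (w - 1)⁻¹ else (w - t)⁻¹) * Y w p.2)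
      ((z⁻¹ • convMat A₀ A₁ At (-1) 0 + (z - 1)⁻¹ • convMat A₀ A₁ At (-1) 1 +
          (z - t)⁻¹ • convMat A₀ A₁ At (-1) 2).mulVec
        (fun p : Fin 3 × Fin 2 =>
          (if p.1 = 0 then z⁻¹ else if p.1 = 1 then (z - 1)⁻¹ else (z - t)⁻¹) * Y z p.2)) z := by
  intro z hz
  obtain ⟨hz0, hz1, hzt⟩ := hΩ' z hz
  have hz1' : z - 1 ≠ 0 := sub_ne_zero.mpr hz1
  have hzt' : z - t ≠ 0 := sub_ne_zero.mpr hzt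
  have hYz := hY z hz
  have hYi : ∀ i : Fin 2, HasDerivAt (fun w => Y w i)
      (((z⁻¹ • A₀ + (z - 1)⁻¹ • A₁ + (z - t)⁻¹ • At).mulVec (Y z)) i) z := by
    intro i
    exact (hasDerivAt_pi.mp hYz) i
  rw [hasDerivAt_pi]
  rintro ⟨k, i⟩
  have heq0 : (-1 / z ^ 2 : ℂ) = -(z⁻¹ * z⁻¹) := by
    rw [neg_div, one_div, sq, mul_inv]
  have heq1 : (-1 / (z - 1) ^ 2 : ℂ) = -((z - 1)⁻¹ * (z - 1)⁻¹) := by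
    rw [neg_div, one_div, sq, mul_inv]
  have heqt : (-1 / (z - t) ^ 2 : ℂ) = -((z - t)⁻¹ * (z - t)⁻¹) := by
    rw [neg_div, one_div, sq, mul_inv]
  have hd0 : HasDerivAt (fun w : ℂ => w⁻¹) (-(z⁻¹ * z⁻¹)) z := by
    rw [← heq0]; simpa using (hasDerivAt_id z).fun_inv hz0
  have hd1 : HasDerivAt (fun w : ℂ => (w - 1)⁻¹) (-((z - 1)⁻¹ * (z - 1)⁻¹)) z := by
    rw [← heq1]; simpa using ((hasDerivAt_id z).sub_const 1).fun_inv hz1'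
  have hdt : HasDerivAt (fun w : ℂ => (w - t)⁻¹) (-((z - t)⁻¹ * (z - t)⁻¹)) z := by
    rw [← heqt]; simpa using ((hasDerivAt_id z).sub_const t).fun_inv hzt'
  fin_cases k <;> fin_cases i <;>
    [ (convert hd0.fun_mul (hYi 0) using 1; rfl; rfl); (convert hd0.fun_mul (hYi 1) using 1; rfl; rfl);
      (convert hd1.fun_mul (hYi 0) using 1; rfl; rfl); (convert hd1.fun_mul (hYi 1) using 1; rfl; rfl);
      (convert hdt.fun_mul (hYi 0) using 1; rfl; rfl); (convert hdt.fun_mul (hYi 1) using 1; rfl; rfl)] <;>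
  · simp only [Matrix.mulVec, dotProduct, Fintype.sum_prod_type, Fin.sum_univ_three,
      Fin.sum_univ_two, convMat, Matrix.of_apply, Matrix.add_apply, Matrix.smul_apply,
      Matrix.one_apply, Pi.add_apply, Pi.smul_apply, smul_eq_mul, Fin.isValue]
    norm_num [Fin.ext_iff]
    ring
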